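/- Let D be a real symmetric n×n matrix and S a subset of the index set with |S| = m, and let D_S denote the principal submatrix of D on the rows and columns indexed by S. Then for every 1 ≤ k ≤ m, the k-th smallest eigenvalue of the m×m positive semidefinite matrix (D_S)² is at most the (n−m+k)-th smallest eigenvalue of the n×n positive semidefinite matrix D². -/

import Mathlib

open Matrix

/-- The ascending list of eigenvalues (with multiplicity) of a real symmetric matrix. -/
noncomputable def sortedEigs {m : Type*} [Fintype m] [DecidableEq m]
    (A : Matrix m m ℝ) : List ℝ :=
  if h : A.IsHermitian then (Finset.univ.val.map h.eigenvalues).sort (· ≤ ·) else []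

section Aux

open Finset

/-- In a sorted list, at least `L.length - j` elements are `≥` the `j`-th element. -/
lemma sorted_filter_ge_length {L : List ℝ} (hL : L.Pairwise (· ≤ ·)) {j : ℕ}
    (hj : j < L.length) :
    L.length - j ≤ (L.filter (fun y => L.getD j 0 ≤ y)).length := by
  have key : ∀ y ∈ L.drop j, L.getD j 0 ≤ y := by
    intro y hy
    obtain ⟨q, hq, rfl⟩ := List.getElem_of_mem hy
    rw [List.getElem_drop, List.getD_eq_getElem L 0 hj]
    have hlt : j + q < L.length := by
      have h2 := hq
      rw [List.length_drop] at h2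
      omega
    have := hL.rel_get_of_le (a := ⟨j, hj⟩) (b := ⟨j + q, hlt⟩) (by simp [Fin.le_def])
    simpa using this
  calc L.length - j = (L.drop j).length := List.length_drop.symm
    _ = ((L.drop j).filter (fun y => L.getD j 0 ≤ y)).length := by
        rw [List.filter_eq_self.mpr (fun y hy => by simpa using key y hy)]
    _ ≤ (L.filter (fun y => L.getD j 0 ≤ y)).length :=
        ((List.drop_sublist j L).filter _).length_le

/-- In a sorted list, at least `j + 1` elements are `≤` the `j`-th element. -/
lemma sorted_filter_le_length {L : List ℝ} (hL : L.Pairwise (· ≤ ·)) {j : ℕ}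
    (hj : j < L.length) :
    j + 1 ≤ (L.filter (fun y => y ≤ L.getD j 0)).length := by
  have key : ∀ y ∈ L.take (j + 1), y ≤ L.getD j 0 := by
    intro y hy
    obtain ⟨q, hq, rfl⟩ := List.getElem_of_mem hy
    have hq2 := hq
    rw [List.length_take] at hq2
    have hq' : q < L.length := by omega
    rw [List.getElem_take, List.getD_eq_getElem L 0 hj]
    have := hL.rel_get_of_le (a := ⟨q, hq'⟩) (b := ⟨j, hj⟩) (by simp [Fin.le_def]; omega)
    simpa using this
  calc j + 1 = (L.take (j + 1)).length := by rw [List.length_take]; omega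
    _ = ((L.take (j + 1)).filter (fun y => y ≤ L.getD j 0)).length := by
        rw [List.filter_eq_self.mpr (fun y hy => by simpa using key y hy)]
    _ ≤ (L.filter (fun y => y ≤ L.getD j 0)).length :=
        ((List.take_sublist (j + 1) L).filter _).length_le

/-- Transfer a filter cardinality from the index set to the sorted list of values. -/
lemma card_filter_eq_sorted {ι : Type*} [Fintype ι] (μ : ι → ℝ)
    (p : ℝ → Prop) [DecidablePred p] :
    (Finset.univ.filter (fun i => p (μ i))).card
      = (((Finset.univ.val.map μ).sort (· ≤ ·)).filter (fun y => p y)).length := by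
  have hfm : Multiset.filter p (Finset.univ.val.map μ)
      = Multiset.map μ (Multiset.filter (p ∘ μ) Finset.univ.val) :=
    Multiset.filter_map p μ Finset.univ.val
  calc (Finset.univ.filter (fun i => p (μ i))).card
      = Multiset.card (Multiset.filter p (Finset.univ.val.map μ)) := by
        rw [hfm, Multiset.card_map]
        rfl
    _ = (((Finset.univ.val.map μ).sort (· ≤ ·)).filter (fun y => p y)).length := by
        conv_lhs => rw [← Multiset.sort_eq (Finset.univ.val.map μ) (· ≤ ·)]
        rw [Multiset.filter_coe, Multiset.coe_card]

/-- Extension by zero of a dite-sum. -/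
lemma sum_dite_mem {α β : Type*} [Fintype α] [DecidableEq α] [AddCommMonoid β]
    (S : Finset α) (g : ∀ j, j ∈ S → β) :
    ∑ j, (if hj : j ∈ S then g j hj else 0) = ∑ j ∈ S.attach, g j.1 j.2 := by
  calc ∑ j, (if hj : j ∈ S then g j hj else 0)
      = ∑ j ∈ S, (if hj : j ∈ S then g j hj else 0) :=
        (Finset.sum_subset S.subset_univ (by intro x _ hx; rw [dif_neg hx])).symm
    _ = ∑ j ∈ S.attach, (if hj : (j : α) ∈ S then g j hj else 0) :=
        (Finset.sum_attach _ _).symm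
    _ = ∑ j ∈ S.attach, g j.1 j.2 := Finset.sum_congr rfl fun j _ => dif_pos j.2

/-- The span of a subfamily of an orthonormal basis has dimension the size of the subfamily. -/
lemma finrank_span_onb_image {ι : Type*} [Fintype ι] [DecidableEq ι]
    (b : OrthonormalBasis ι ℝ (EuclideanSpace ℝ ι)) (T : Finset ι) :
    Module.finrank ℝ (Submodule.span ℝ (⇑b '' ↑T)) = T.card := by
  have li : LinearIndependent ℝ (fun x : (↑T : Set ι) => b x) :=
    b.orthonormal.linearIndependent.comp _ Subtype.val_injective
  rw [Set.image_eq_range, finrank_span_eq_card li]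
  simp

variable {ι : Type*} [Fintype ι] [DecidableEq ι]

open scoped RealInnerProductSpace

/-- Lower bound for the Rayleigh quotient on a spectral subspace. -/
lemma quad_ge {A : Matrix ι ι ℝ} (hA : A.IsHermitian)
    {s : ℝ} {T : Set ι} (hT : ∀ i ∈ T, s ≤ hA.eigenvalues i)
    {y : EuclideanSpace ℝ ι}
    (hy : y ∈ Submodule.span ℝ (⇑hA.eigenvectorBasis '' T)) :
    s * ⟪y, y⟫ ≤ ⟪y, Matrix.toEuclideanLin A y⟫ := by
  set b := hA.eigenvectorBasis with hb
  have hmem : y ∈ Submodule.span ℝ (⇑b.toBasis '' T) := by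
    rwa [OrthonormalBasis.coe_toBasis]
  set c : ι → ℝ := fun i => b.toBasis.repr y i with hc
  have hsupp : ∀ i, i ∉ T → c i = 0 := by
    intro i hi
    by_contra h
    exact hi ((b.toBasis.mem_span_image).mp hmem (Finsupp.mem_support_iff.mpr h))
  have hyc : y = ∑ i, c i • b i := by
    conv_lhs => rw [← b.toBasis.sum_repr y]
    simp [hc]
  have key : ∀ i, Matrix.toEuclideanLin A (b i) = hA.eigenvalues i • b i :=
    fun i => congrArg (WithLp.equiv 2 (ι → ℝ)).symm (hA.mulVec_eigenvectorBasis i)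
  have hAy : Matrix.toEuclideanLin A y = ∑ i, (c i * hA.eigenvalues i) • b i := by
    rw [hyc, map_sum]
    refine Finset.sum_congr rfl fun i _ => ?_
    rw [LinearMap.map_smul, key, smul_smul]
  have h1 : ⟪y, Matrix.toEuclideanLin A y⟫ = ∑ i, c i * (c i * hA.eigenvalues i) := by
    rw [hAy]
    nth_rewrite 1 [hyc]
    simpa using b.orthonormal.inner_sum c (fun i => c i * hA.eigenvalues i) Finset.univ
  have h2 : ⟪y, y⟫ = ∑ i, c i * c i := by
    rw [hyc]
    simpa using b.orthonormal.inner_sum c c Finset.univ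
  rw [h1, h2, Finset.mul_sum]
  refine Finset.sum_le_sum fun i _ => ?_
  by_cases hci : c i = 0
  · simp [hci]
  · have hiT : i ∈ T := by
      by_contra h
      exact hci (hsupp i h)
    have h0 : 0 ≤ c i * c i := mul_self_nonneg _
    calc s * (c i * c i) ≤ hA.eigenvalues i * (c i * c i) :=
          mul_le_mul_of_nonneg_right (hT i hiT) h0
      _ = c i * (c i * hA.eigenvalues i) := by ring

/-- Upper bound for the Rayleigh quotient on a spectral subspace. -/
lemma quad_le {A : Matrix ι ι ℝ} (hA : A.IsHermitian)
    {t : ℝ} {T : Set ι} (hT : ∀ i ∈ T, hA.eigenvalues i ≤ t)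
    {y : EuclideanSpace ℝ ι}
    (hy : y ∈ Submodule.span ℝ (⇑hA.eigenvectorBasis '' T)) :
    ⟪y, Matrix.toEuclideanLin A y⟫ ≤ t * ⟪y, y⟫ := by
  set b := hA.eigenvectorBasis with hb
  have hmem : y ∈ Submodule.span ℝ (⇑b.toBasis '' T) := by
    rwa [OrthonormalBasis.coe_toBasis]
  set c : ι → ℝ := fun i => b.toBasis.repr y i with hc
  have hsupp : ∀ i, i ∉ T → c i = 0 := by
    intro i hi
    by_contra h
    exact hi ((b.toBasis.mem_span_image).mp hmem (Finsupp.mem_support_iff.mpr h))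
  have hyc : y = ∑ i, c i • b i := by
    conv_lhs => rw [← b.toBasis.sum_repr y]
    simp [hc]
  have key : ∀ i, Matrix.toEuclideanLin A (b i) = hA.eigenvalues i • b i :=
    fun i => congrArg (WithLp.equiv 2 (ι → ℝ)).symm (hA.mulVec_eigenvectorBasis i)
  have hAy : Matrix.toEuclideanLin A y = ∑ i, (c i * hA.eigenvalues i) • b i := by
    rw [hyc, map_sum]
    refine Finset.sum_congr rfl fun i _ => ?_
    rw [LinearMap.map_smul, key, smul_smul]
  have h1 : ⟪y, Matrix.toEuclideanLin A y⟫ = ∑ i, c i * (c i * hA.eigenvalues i) := by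
    rw [hAy]
    nth_rewrite 1 [hyc]
    simpa using b.orthonormal.inner_sum c (fun i => c i * hA.eigenvalues i) Finset.univ
  have h2 : ⟪y, y⟫ = ∑ i, c i * c i := by
    rw [hyc]
    simpa using b.orthonormal.inner_sum c c Finset.univ
  rw [h1, h2, Finset.mul_sum]
  refine Finset.sum_le_sum fun i _ => ?_
  by_cases hci : c i = 0
  · simp [hci]
  · have hiT : i ∈ T := by
      by_contra h
      exact hci (hsupp i h)
    have h0 : 0 ≤ c i * c i := mul_self_nonneg _
    calc c i * (c i * hA.eigenvalues i) = hA.eigenvalues i * (c i * c i) := by ring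
      _ ≤ t * (c i * c i) := mul_le_mul_of_nonneg_right (hT i hiT) h0

end Aux

open scoped RealInnerProductSpace

/-- **Spectral monotonicity, matrix form.**  If `D` is a real symmetric `n × n` matrix
and `D_S` its principal submatrix on a subset `S` with `m = |S|`, then for every `k`
(0-based, `k < m`) the `k`-th smallest eigenvalue of `(D_S)²` is at most the
`(n - m + k)`-th smallest eigenvalue of `D²`. -/
theorem principal_submatrix_square_eigenvalues
    (n : ℕ) (D : Matrix (Fin n) (Fin n) ℝ) (hD : D.IsSymm) (S : Finset (Fin n))
    (DS : Matrix {i // i ∈ S} {i // i ∈ S} ℝ)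
    (hDS : DS = Matrix.of fun i j => D i.1 j.1) :
    ∀ k < S.card,
      (sortedEigs (DS * DS)).getD k 0 ≤
        (sortedEigs (D * D)).getD (n - S.card + k) 0 := by
  classical
  intro k hk
  have hDS_symm : DS.IsSymm := by
    rw [hDS]
    ext i j
    exact hD.apply i.1 j.1
  have hA : (D * D).IsHermitian := by
    rw [Matrix.IsHermitian, conjTranspose_eq_transpose_of_trivial, Matrix.transpose_mul,
      hD.eq]
  have hB : (DS * DS).IsHermitian := by
    rw [Matrix.IsHermitian, conjTranspose_eq_transpose_of_trivial, Matrix.transpose_mul,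
      hDS_symm.eq]
  -- notation
  set m := S.card with hm
  have hmn : m ≤ n := by
    simpa using Finset.card_le_univ S
  -- unfold sortedEigs
  rw [sortedEigs, sortedEigs, dif_pos hA, dif_pos hB]
  set LB : List ℝ := ((Finset.univ.val.map hB.eigenvalues).sort (· ≤ ·)) with hLB
  set LA : List ℝ := ((Finset.univ.val.map hA.eigenvalues).sort (· ≤ ·)) with hLA
  have hLBlen : LB.length = m := by
    rw [hLB, Multiset.length_sort, Multiset.card_map]
    have h : (Finset.univ : Finset {i // i ∈ S}).card = S.card := by
      rw [Finset.card_univ, Fintype.card_coe]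
    exact h
  have hLAlen : LA.length = n := by
    rw [hLA, Multiset.length_sort, Multiset.card_map]
    simp
  have hkB : k < LB.length := by omega
  have hkA : n - m + k < LA.length := by omega
  set s : ℝ := LB.getD k 0 with hs
  set t : ℝ := LA.getD (n - m + k) 0 with ht
  -- counting
  have hcountB : m - k ≤ (Finset.univ.filter (fun i => s ≤ hB.eigenvalues i)).card := by
    rw [card_filter_eq_sorted hB.eigenvalues (fun y => s ≤ y)]
    have := sorted_filter_ge_length (Multiset.pairwise_sort _ (· ≤ ·)) hkB
    rw [hLBlen] at this
    exact this
  have hcountA : n - m + k + 1 ≤ (Finset.univ.filter (fun i => hA.eigenvalues i ≤ t)).card := by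
    rw [card_filter_eq_sorted hA.eigenvalues (fun y => y ≤ t)]
    have := sorted_filter_le_length (Multiset.pairwise_sort _ (· ≤ ·)) hkA
    exact this
  -- subspaces
  set TB : Finset {i // i ∈ S} := Finset.univ.filter (fun i => s ≤ hB.eigenvalues i) with hTB
  set TA : Finset (Fin n) := Finset.univ.filter (fun i => hA.eigenvalues i ≤ t) with hTA
  set E₀ : Submodule ℝ (EuclideanSpace ℝ {i // i ∈ S}) :=
    Submodule.span ℝ (⇑hB.eigenvectorBasis '' ↑TB) with hE₀
  set F : Submodule ℝ (EuclideanSpace ℝ (Fin n)) :=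
    Submodule.span ℝ (⇑hA.eigenvectorBasis '' ↑TA) with hF
  -- zero-extension linear map
  set f : EuclideanSpace ℝ {i // i ∈ S} →ₗ[ℝ] EuclideanSpace ℝ (Fin n) :=
    { toFun := fun y => WithLp.toLp 2 (fun i => if h : i ∈ S then y ⟨i, h⟩ else 0 : Fin n → ℝ)
      map_add' := by
        intro a b
        ext i
        by_cases h : i ∈ S <;> simp [h]
      map_smul' := by
        intro r a
        ext i
        by_cases h : i ∈ S <;> simp [h] } with hfdef
  have hf_apply : ∀ (y : EuclideanSpace ℝ {i // i ∈ S}) (i : Fin n),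
      f y i = if h : i ∈ S then y ⟨i, h⟩ else 0 := fun y i => rfl
  have hf_inj : Function.Injective f := by
    intro a b hab
    ext j
    have h1 := congrArg (fun v => v j.1) hab
    rw [hf_apply, hf_apply, dif_pos j.2, dif_pos j.2] at h1
    simpa using h1
  set E : Submodule ℝ (EuclideanSpace ℝ (Fin n)) := E₀.map f with hE
  have hErank : Module.finrank ℝ E = TB.card := by
    rw [hE, ← (Submodule.equivMapOfInjective f hf_inj E₀).finrank_eq]
    exact finrank_span_onb_image hB.eigenvectorBasis TB
  have hFrank : Module.finrank ℝ F = TA.card := finrank_span_onb_image hA.eigenvectorBasis TA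
  -- dimension counting
  have hinf : 0 < Module.finrank ℝ ↥(E ⊓ F) := by
    have hsum := Submodule.finrank_sup_add_finrank_inf_eq E F
    have hle : Module.finrank ℝ ↥(E ⊔ F) ≤ n :=
      le_trans (Submodule.finrank_le _) (by simp)
    rw [hErank, hFrank] at hsum
    omega
  obtain ⟨x, hxEF, hx0⟩ : ∃ x ∈ E ⊓ F, x ≠ 0 := by
    by_contra hcon
    push_neg at hcon
    have hbot : (E ⊓ F : Submodule ℝ _) = ⊥ := by
      rw [Submodule.eq_bot_iff]
      exact hcon
    rw [hbot, finrank_bot] at hinf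
    exact lt_irrefl 0 hinf
  obtain ⟨hxE, hxF⟩ := Submodule.mem_inf.mp hxEF
  obtain ⟨y, hyE₀, hyx⟩ := Submodule.mem_map.mp hxE
  have hy0 : y ≠ 0 := by
    intro h
    exact hx0 (by rw [← hyx, h, map_zero])
  -- quadratic form bounds
  have hTBmem : ∀ i ∈ (↑TB : Set {i // i ∈ S}), s ≤ hB.eigenvalues i := by
    intro i hi
    have h2 : i ∈ TB := Finset.mem_coe.mp hi
    rw [hTB] at h2
    exact (Finset.mem_filter.mp h2).2
  have hTAmem : ∀ i ∈ (↑TA : Set (Fin n)), hA.eigenvalues i ≤ t := by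
    intro i hi
    have h2 : i ∈ TA := Finset.mem_coe.mp hi
    rw [hTA] at h2
    exact (Finset.mem_filter.mp h2).2
  have hq1 : s * ⟪y, y⟫ ≤ ⟪y, Matrix.toEuclideanLin (DS * DS) y⟫ :=
    quad_ge hB hTBmem hyE₀
  have hq2 : ⟪x, Matrix.toEuclideanLin (D * D) x⟫ ≤ t * ⟪x, x⟫ :=
    quad_le hA hTAmem hxF
  -- relating the quadratic forms to squared norms of D *ᵥ ·
  have hmidB : ⟪y, Matrix.toEuclideanLin (DS * DS) y⟫ = (DS *ᵥ y) ⬝ᵥ (DS *ᵥ y) := by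
    rw [EuclideanSpace.inner_eq_star_dotProduct]
    rw [dotProduct_comm]
    show dotProduct (star (y : {i // i ∈ S} → ℝ)) ((DS * DS) *ᵥ y) = _
    rw [star_trivial, ← Matrix.mulVec_mulVec, Matrix.dotProduct_mulVec]
    have hvm : (y : {i // i ∈ S} → ℝ) ᵥ* DS = DS *ᵥ (y : {i // i ∈ S} → ℝ) := by
      conv_lhs => rw [← hDS_symm.eq]
      rw [Matrix.vecMul_transpose]
    rw [hvm]
  have hmidA : ⟪x, Matrix.toEuclideanLin (D * D) x⟫ = (D *ᵥ x) ⬝ᵥ (D *ᵥ x) := by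
    rw [EuclideanSpace.inner_eq_star_dotProduct]
    rw [dotProduct_comm]
    show dotProduct (star (x : Fin n → ℝ)) ((D * D) *ᵥ x) = _
    rw [star_trivial, ← Matrix.mulVec_mulVec, Matrix.dotProduct_mulVec]
    have hvm : (x : Fin n → ℝ) ᵥ* D = D *ᵥ (x : Fin n → ℝ) := by
      conv_lhs => rw [← hD.eq]
      rw [Matrix.vecMul_transpose]
    rw [hvm]
  -- coordinates of x
  have hx_apply : ∀ i : Fin n, x i = if h : i ∈ S then y ⟨i, h⟩ else 0 := by
    intro i
    rw [← hyx]
    exact hf_apply y i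
  -- equality of norms
  have hnorm : ⟪x, x⟫ = ⟪y, y⟫ := by
    rw [EuclideanSpace.inner_eq_star_dotProduct, EuclideanSpace.inner_eq_star_dotProduct]
    show dotProduct (x : Fin n → ℝ) (star (x : Fin n → ℝ))
      = dotProduct (y : {i // i ∈ S} → ℝ) (star (y : {i // i ∈ S} → ℝ))
    rw [star_trivial, star_trivial]
    unfold dotProduct
    calc ∑ i, x i * x i
        = ∑ i, (if h : i ∈ S then y ⟨i, h⟩ * y ⟨i, h⟩ else 0) := by
          refine Finset.sum_congr rfl fun i _ => ?_
          rw [hx_apply i]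
          by_cases h : i ∈ S <;> simp [h]
      _ = ∑ i ∈ S.attach, y i * y i := sum_dite_mem S (fun i h => y ⟨i, h⟩ * y ⟨i, h⟩)
      _ = ∑ i, y i * y i := by rw [← Finset.univ_eq_attach]
  -- coordinates of D *ᵥ x on S
  have hDx : ∀ (j : {i // i ∈ S}), (D *ᵥ (x : Fin n → ℝ)) j.1 = (DS *ᵥ (y : {i // i ∈ S} → ℝ)) j := by
    intro j
    unfold Matrix.mulVec dotProduct
    calc ∑ i, D j.1 i * x i
        = ∑ i, (if h : i ∈ S then D j.1 i * y ⟨i, h⟩ else 0) := by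
          refine Finset.sum_congr rfl fun i _ => ?_
          rw [hx_apply i]
          by_cases h : i ∈ S <;> simp [h]
      _ = ∑ i ∈ S.attach, D j.1 i.1 * y i := sum_dite_mem S (fun i h => D j.1 i * y ⟨i, h⟩)
      _ = ∑ i, DS j i * y i := by
          rw [← Finset.univ_eq_attach]
          exact Finset.sum_congr rfl fun i _ => by rw [hDS]; rfl
  -- the middle inequality
  have hmid : (DS *ᵥ (y : {i // i ∈ S} → ℝ)) ⬝ᵥ (DS *ᵥ (y : {i // i ∈ S} → ℝ))
      ≤ (D *ᵥ (x : Fin n → ℝ)) ⬝ᵥ (D *ᵥ (x : Fin n → ℝ)) := by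
    unfold dotProduct
    calc ∑ j, (DS *ᵥ (y : {i // i ∈ S} → ℝ)) j * (DS *ᵥ (y : {i // i ∈ S} → ℝ)) j
        = ∑ j ∈ S.attach, (D *ᵥ (x : Fin n → ℝ)) j.1 * (D *ᵥ (x : Fin n → ℝ)) j.1 := by
          rw [Finset.univ_eq_attach]
          exact Finset.sum_congr rfl fun j _ => by rw [hDx j]
      _ = ∑ j ∈ S, (D *ᵥ (x : Fin n → ℝ)) j * (D *ᵥ (x : Fin n → ℝ)) j :=
          Finset.sum_attach S
            (fun j => (D *ᵥ (x : Fin n → ℝ)) j * (D *ᵥ (x : Fin n → ℝ)) j)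
      _ ≤ ∑ j, (D *ᵥ (x : Fin n → ℝ)) j * (D *ᵥ (x : Fin n → ℝ)) j :=
          Finset.sum_le_sum_of_subset_of_nonneg S.subset_univ
            (fun i _ _ => mul_self_nonneg _)
  -- positivity
  have hypos : 0 < ⟪y, y⟫ :=
    lt_of_le_of_ne real_inner_self_nonneg
      (fun h => hy0 (inner_self_eq_zero.mp h.symm))
  -- combine
  have hchain : s * ⟪y, y⟫ ≤ t * ⟪y, y⟫ := by
    calc s * ⟪y, y⟫ ≤ ⟪y, Matrix.toEuclideanLin (DS * DS) y⟫ := hq1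
      _ = (DS *ᵥ y) ⬝ᵥ (DS *ᵥ y) := hmidB
      _ ≤ (D *ᵥ x) ⬝ᵥ (D *ᵥ x) := hmid
      _ = ⟪x, Matrix.toEuclideanLin (D * D) x⟫ := hmidA.symm
      _ ≤ t * ⟪x, x⟫ := hq2
      _ = t * ⟪y, y⟫ := by rw [hnorm]
  exact le_of_mul_le_mul_right hchain hypos
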